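/- A mapping f: E(G) → E(H) between finite directed graphs is M-tension-continuous if and only if for every M-flow φ on G, the algebraic image φ_f, defined by φ_f(e') = ∑_{e: f(e)=e'} φ(e), is an M-flow on H. -/

import Mathlib

/-- A directed graph on vertex type `V`, given by its adjacency relation. -/
structure Dgraph (V : Type) where
  Adj : V → V → Prop

namespace Dgraph

variable {V : Type}

/-- The type of edges of a directed graph. -/
def Edge (D : Dgraph V) : Type := {p : V × V // D.Adj p.1 p.2}

def src {D : Dgraph V} (e : D.Edge) : V := e.1.1
def tgt {D : Dgraph V} (e : D.Edge) : V := e.1.2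

/-- A closed walk of length `n+1`: at step `i` the edge `e i` is traversed
forwards (if `dir i`) or backwards, from `v i` to `v (i+1)` (cyclically). -/
def IsClosedWalk (D : Dgraph V) {n : ℕ} (v : Fin (n + 1) → V)
    (e : Fin (n + 1) → D.Edge) (dir : Fin (n + 1) → Bool) : Prop :=
  ∀ i, if dir i then src (e i) = v i ∧ tgt (e i) = v (i + 1)
    else tgt (e i) = v i ∧ src (e i) = v (i + 1)

/-- A circuit: a closed walk with pairwise distinct vertices. -/
def IsCircuit (D : Dgraph V) {n : ℕ} (v : Fin (n + 1) → V)
    (e : Fin (n + 1) → D.Edge) (dir : Fin (n + 1) → Bool) : Prop :=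
  D.IsClosedWalk v e dir ∧ Function.Injective v

/-- An `M`-tension: the signed sum along every circuit vanishes. -/
def IsTension {M : Type} [AddCommGroup M] (D : Dgraph V) (τ : D.Edge → M) : Prop :=
  ∀ (n : ℕ) (v : Fin (n + 1) → V) (e : Fin (n + 1) → D.Edge) (dir : Fin (n + 1) → Bool),
    D.IsCircuit v e dir → ∑ i, (if dir i then τ (e i) else -τ (e i)) = 0

/-- `f : E(G) → E(H)` is `M`-tension-continuous if it lifts `M`-tensions to
`M`-tensions. -/
def TensionContinuous (M : Type) [AddCommGroup M] {V W : Type}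
    (G : Dgraph V) (H : Dgraph W) (f : G.Edge → H.Edge) : Prop :=
  ∀ τ : H.Edge → M, H.IsTension τ → G.IsTension (τ ∘ f)

end Dgraph

/-- An `M`-flow: at every vertex the sum of values on entering edges equals
the sum on leaving edges. -/
def Dgraph.IsFlow (M : Type) [AddCommGroup M] {V : Type} [DecidableEq V]
    (D : Dgraph V) [Fintype D.Edge] (φ : D.Edge → M) : Prop :=
  ∀ v : V, (∑ e : D.Edge, if Dgraph.tgt e = v then φ e else 0) =
    ∑ e : D.Edge, if Dgraph.src e = v then φ e else 0


namespace Dgraph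
variable {V : Type}
variable {D : Dgraph V} {M : Type} [AddCommGroup M]

def stepSrc (s : D.Edge × Bool) : V := if s.2 then src s.1 else tgt s.1
def stepTgt (s : D.Edge × Bool) : V := if s.2 then tgt s.1 else src s.1

def IsWalkFrom (D : Dgraph V) : V → V → List (D.Edge × Bool) → Prop
  | u, w, [] => u = w
  | u, w, s :: L => stepSrc s = u ∧ D.IsWalkFrom (stepTgt s) w L

def walkSum (τ : D.Edge → M) (L : List (D.Edge × Bool)) : M :=
  (L.map fun s => if s.2 then τ s.1 else -τ s.1).sum

@[simp] lemma walkSum_nil (τ : D.Edge → M) : walkSum τ ([] : List (D.Edge × Bool)) = 0 := rfl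

@[simp] lemma walkSum_cons (τ : D.Edge → M) (s : D.Edge × Bool) (L : List (D.Edge × Bool)) :
    walkSum τ (s :: L) = (if s.2 then τ s.1 else -τ s.1) + walkSum τ L := by
  simp [walkSum]

@[simp] lemma walkSum_append (τ : D.Edge → M) (L₁ L₂ : List (D.Edge × Bool)) :
    walkSum τ (L₁ ++ L₂) = walkSum τ L₁ + walkSum τ L₂ := by
  simp [walkSum]

lemma iwf_append {u x w : V} {L₁ L₂ : List (D.Edge × Bool)}
    (h₁ : D.IsWalkFrom u x L₁) (h₂ : D.IsWalkFrom x w L₂) :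
    D.IsWalkFrom u w (L₁ ++ L₂) := by
  induction L₁ generalizing u with
  | nil => cases h₁; simpa using h₂
  | cons s L ih => exact ⟨h₁.1, ih h₁.2⟩

lemma iwf_split {u w : V} {L₁ L₂ : List (D.Edge × Bool)}
    (h : D.IsWalkFrom u w (L₁ ++ L₂)) :
    ∃ x, D.IsWalkFrom u x L₁ ∧ D.IsWalkFrom x w L₂ := by
  induction L₁ generalizing u with
  | nil => exact ⟨u, rfl, h⟩
  | cons s L ih =>
    obtain ⟨x, hx1, hx2⟩ := ih h.2
    exact ⟨x, ⟨h.1, hx1⟩, hx2⟩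

def revStep (s : D.Edge × Bool) : D.Edge × Bool := (s.1, !s.2)

@[simp] lemma stepSrc_revStep (s : D.Edge × Bool) : stepSrc (revStep s) = stepTgt s := by
  cases s with | mk e b => cases b <;> simp [stepSrc, stepTgt, revStep]

@[simp] lemma stepTgt_revStep (s : D.Edge × Bool) : stepTgt (revStep s) = stepSrc s := by
  cases s with | mk e b => cases b <;> simp [stepSrc, stepTgt, revStep]

def revWalk (L : List (D.Edge × Bool)) : List (D.Edge × Bool) := (L.reverse).map revStep

lemma iwf_rev {u w : V} {L : List (D.Edge × Bool)} (h : D.IsWalkFrom u w L) :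
    D.IsWalkFrom w u (revWalk L) := by
  induction L generalizing u with
  | nil => cases h; exact rfl
  | cons s L ih =>
    have : revWalk (s :: L) = revWalk L ++ [revStep s] := by simp [revWalk]
    rw [this]
    exact iwf_append (ih h.2) ⟨by simp, by simp [h.1, IsWalkFrom]⟩

lemma walkSum_rev (τ : D.Edge → M) (L : List (D.Edge × Bool)) :
    walkSum τ (revWalk L) = - walkSum τ L := by
  induction L with
  | nil => simp [revWalk]
  | cons s L ih =>
    have : revWalk (s :: L) = revWalk L ++ [revStep s] := by simp [revWalk]
    rw [this, walkSum_append, ih, walkSum_cons]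
    cases s with | mk e b => cases b <;> simp [revStep] <;> abel

end Dgraph


namespace Dgraph
variable {V : Type} {D : Dgraph V} {M : Type} [AddCommGroup M]

def walkVtx (u : V) : List (D.Edge × Bool) → ℕ → V
  | _, 0 => u
  | [], _ + 1 => u
  | s :: L, k + 1 => walkVtx (stepTgt s) L k

lemma wv_src {u w : V} {L : List (D.Edge × Bool)} (h : D.IsWalkFrom u w L) :
    ∀ (k : ℕ) (hk : k < L.length), stepSrc (L.get ⟨k, hk⟩) = walkVtx u L k := by
  induction L generalizing u with
  | nil => intro k hk; simp at hk
  | cons s L ih =>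
    intro k hk
    cases k with
    | zero => exact h.1
    | succ k => exact ih h.2 k (by simpa using hk)

lemma wv_tgt {u w : V} {L : List (D.Edge × Bool)} (h : D.IsWalkFrom u w L) :
    ∀ (k : ℕ) (hk : k < L.length), stepTgt (L.get ⟨k, hk⟩) = walkVtx u L (k + 1) := by
  induction L generalizing u with
  | nil => intro k hk; simp at hk
  | cons s L ih =>
    intro k hk
    cases k with
    | zero => simp [walkVtx]
    | succ k => exact ih h.2 k (by simpa using hk)

lemma wv_end {u w : V} {L : List (D.Edge × Bool)} (h : D.IsWalkFrom u w L) :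
    walkVtx u L L.length = w := by
  induction L generalizing u with
  | nil => exact h
  | cons s L ih => exact ih h.2

lemma exists_dup_map {α β : Type*} (f : α → β) :
    ∀ (l : List α), ¬ (l.map f).Nodup →
      ∃ (a b : α) (l₁ l₂ l₃ : List α), l = l₁ ++ a :: l₂ ++ b :: l₃ ∧ f a = f b := by
  intro l
  induction l with
  | nil => intro h; simp at h
  | cons s t ih =>
    intro h
    by_cases ht : (t.map f).Nodup
    · have hmem : f s ∈ t.map f := by
        by_contra hn
        exact h (by simp [List.nodup_cons, hn, ht])
      obtain ⟨b, hb, hfb⟩ := List.mem_map.1 hmem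
      obtain ⟨l₂, l₃, rfl⟩ := List.append_of_mem hb
      exact ⟨s, b, [], l₂, l₃, by simp, hfb.symm⟩
    · obtain ⟨a, b, l₁, l₂, l₃, rfl, hab⟩ := ih ht
      exact ⟨a, b, s :: l₁, l₂, l₃, by simp, hab⟩

end Dgraph


namespace Dgraph
variable {V : Type} {D : Dgraph V} {M : Type} [AddCommGroup M]

@[simp] lemma walkVtx_zero {u : V} {L : List (D.Edge × Bool)} : walkVtx u L 0 = u := by
  cases L <;> rfl

lemma walkSum_eq_sum_get (τ : D.Edge → M) (L : List (D.Edge × Bool)) :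
    walkSum τ L
      = ∑ i : Fin L.length, (if (L.get i).2 then τ (L.get i).1 else -τ (L.get i).1) := by
  rw [walkSum]
  conv_lhs => rw [← List.ofFn_get L]
  rw [List.map_ofFn, List.sum_ofFn]
  rfl

lemma circuit_case {τ : D.Edge → M} (hτ : D.IsTension τ) {u : V}
    {L : List (D.Edge × Bool)} (h : D.IsWalkFrom u u L) {n : ℕ} (hn : L.length = n + 1)
    (hnd : (L.map stepSrc).Nodup) : walkSum τ L = 0 := by
  have hlt : ∀ i : Fin (n + 1), i.val < L.length := fun i => by rw [hn]; exact i.isLt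
  have hv1 : ∀ i : Fin (n + 1),
      walkVtx u L ((i + 1 : Fin (n + 1)).val) = walkVtx u L (i.val + 1) := by
    intro i
    rcases Nat.lt_or_ge (i.val + 1) (n + 1) with hlt' | hge
    · congr 1
      simp [Fin.add_def, Nat.mod_eq_of_lt hlt']
    · have hi : i.val = n := by omega
      have h0 : (i + 1 : Fin (n + 1)).val = 0 := by simp [Fin.add_def, hi]
      rw [h0, hi, ← hn, wv_end h, walkVtx_zero]
  have hcw : D.IsClosedWalk (fun i : Fin (n+1) => walkVtx u L i.val)
      (fun i => (L.get ⟨i.val, hlt i⟩).1) (fun i => (L.get ⟨i.val, hlt i⟩).2) := by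
    intro i
    have h1 := wv_src h i.val (hlt i)
    have h2 := wv_tgt h i.val (hlt i)
    have h3 := hv1 i
    simp only
    cases hd : (L.get ⟨i.val, hlt i⟩).2 with
    | false =>
      simp only [stepSrc, stepTgt, List.get_eq_getElem] at h1 h2 hd
      rw [hd] at h1 h2
      simp only [Bool.false_eq_true, if_false] at h1 h2
      simp only [List.get_eq_getElem]
      rw [if_neg (by simp)]
      refine ⟨h1, ?_⟩
      rw [h3]; exact h2
    | true =>
      simp only [stepSrc, stepTgt, List.get_eq_getElem] at h1 h2 hd
      rw [hd] at h1 h2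
      simp only [if_true] at h1 h2
      simp only [List.get_eq_getElem]
      rw [if_pos trivial]
      refine ⟨h1, ?_⟩
      rw [h3]; exact h2
  have hinj : Function.Injective (fun i : Fin (n+1) => walkVtx u L i.val) := by
    intro i j hij
    simp only at hij
    rw [← wv_src h i.val (hlt i), ← wv_src h j.val (hlt j)] at hij
    have hlen : ∀ k : Fin (n+1), k.val < (L.map stepSrc).length := by
      intro k; rw [List.length_map]; exact hlt k
    have : (L.map stepSrc).get ⟨i.val, hlen i⟩ = (L.map stepSrc).get ⟨j.val, hlen j⟩ := by
      rw [List.get_eq_getElem, List.get_eq_getElem, List.getElem_map, List.getElem_map]; exact hij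
    have h5 := List.nodup_iff_injective_get.mp hnd this
    have hv : i.val = j.val := by simpa using h5
    exact Fin.ext hv
  have key := hτ n _ _ _ ⟨hcw, hinj⟩
  rw [walkSum_eq_sum_get]
  refine Eq.trans ?_ key
  refine Fintype.sum_equiv (finCongr hn) _ _ (fun i => ?_)
  congr 1

lemma closedWalkSum_aux {τ : D.Edge → M} (hτ : D.IsTension τ) :
    ∀ (N : ℕ) (L : List (D.Edge × Bool)), L.length ≤ N → ∀ u : V,
      D.IsWalkFrom u u L → walkSum τ L = 0 := by
  intro N
  induction N with
  | zero =>
    intro L hL u h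
    have : L = [] := List.length_eq_zero_iff.mp (Nat.le_zero.mp hL)
    subst this; simp
  | succ N ih =>
    intro L hL u h
    by_cases hnil : L = []
    · subst hnil; simp
    · by_cases hnd : (L.map stepSrc).Nodup
      · obtain ⟨n, hn⟩ := Nat.exists_eq_succ_of_ne_zero
          (fun h0 => hnil (List.length_eq_zero_iff.mp h0))
        exact circuit_case hτ h hn hnd
      · obtain ⟨s₁, s₂, A, B, C, hdec, hss⟩ := exists_dup_map stepSrc L hnd
        subst hdec
        obtain ⟨x₁, hAB, hrest⟩ := iwf_split h
        obtain ⟨y, hA, hB⟩ := iwf_split hAB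
        have hy : y = x₁ := by rw [← hB.1, hss]; exact hrest.1
        subst hy
        have h1 : walkSum τ (s₁ :: B) = 0 := by
          refine ih _ ?_ y hB
          simp only [List.length_append, List.length_cons] at hL ⊢
          omega
        have h2 : walkSum τ (A ++ s₂ :: C) = 0 := by
          refine ih _ ?_ u (iwf_append hA hrest)
          simp only [List.length_append, List.length_cons] at hL ⊢
          omega
        have e1 : walkSum τ ((A ++ s₁ :: B) ++ s₂ :: C)
            = walkSum τ (s₁ :: B) + walkSum τ (A ++ s₂ :: C) := by
          simp only [walkSum_append, walkSum_cons]
          abel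
        rw [e1, h1, h2, add_zero]

end Dgraph


namespace Dgraph
variable {V : Type} {D : Dgraph V} {M : Type} [AddCommGroup M]

lemma isTension_sub (g : V → M) :
    D.IsTension (fun e => g (tgt e) - g (src e)) := by
  intro n v e dir ⟨hcw, _⟩
  have hterm : ∀ i : Fin (n + 1),
      (if dir i then g (tgt (e i)) - g (src (e i)) else -(g (tgt (e i)) - g (src (e i))))
        = g (v (i + 1)) - g (v i) := by
    intro i
    have := hcw i
    cases hd : dir i with
    | false =>
      rw [hd] at this
      simp only [Bool.false_eq_true, if_false] at this ⊢
      rw [this.1, this.2]; abel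
    | true =>
      rw [hd] at this
      simp only [if_true] at this ⊢
      rw [this.1, this.2]
  calc (∑ i, if dir i then g (tgt (e i)) - g (src (e i))
          else -(g (tgt (e i)) - g (src (e i))))
      = ∑ i : Fin (n + 1), (g (v (i + 1)) - g (v i)) := by
        exact Finset.sum_congr rfl fun i _ => hterm i
    _ = (∑ i : Fin (n + 1), g (v (i + 1))) - ∑ i : Fin (n + 1), g (v i) := by
        rw [Finset.sum_sub_distrib]
    _ = 0 := by
        have hre : (∑ i : Fin (n + 1), g (v (i + 1))) = ∑ i : Fin (n + 1), g (v i) :=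
          Fintype.sum_equiv (Equiv.addRight (1 : Fin (n + 1)))
            (fun i => g (v (i + 1))) (fun i => g (v i)) (fun i => rfl)
        rw [hre, sub_self]

lemma exists_potential {τ : D.Edge → M} (hτ : D.IsTension τ) :
    ∃ g : V → M, ∀ e : D.Edge, τ e = g (tgt e) - g (src e) := by
  classical
  let st : Setoid V := ⟨fun a b => ∃ L, D.IsWalkFrom a b L,
    ⟨fun a => ⟨[], rfl⟩,
     fun ⟨L, hL⟩ => ⟨revWalk L, iwf_rev hL⟩,
     fun ⟨L₁, h₁⟩ ⟨L₂, h₂⟩ => ⟨L₁ ++ L₂, iwf_append h₁ h₂⟩⟩⟩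
  let rep : V → V := fun v => (Quotient.mk st v).out
  have hrep : ∀ v : V, ∃ L, D.IsWalkFrom (rep v) v L := by
    intro v
    exact Quotient.exact (Quotient.out_eq (Quotient.mk st v))
  choose Lw hLw using hrep
  refine ⟨fun v => walkSum τ (Lw v), fun e => ?_⟩
  have hre : (st : Setoid V).r (src e) (tgt e) := ⟨[(e, true)], ⟨rfl, rfl⟩⟩
  have hrr : rep (src e) = rep (tgt e) := by
    show (Quotient.mk st (src e)).out = (Quotient.mk st (tgt e)).out
    rw [Quotient.sound hre]
  have hw : D.IsWalkFrom (rep (src e)) (rep (src e))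
      (Lw (src e) ++ (e, true) :: revWalk (Lw (tgt e))) := by
    refine iwf_append (hLw (src e)) ⟨rfl, ?_⟩
    show D.IsWalkFrom (tgt e) (rep (src e)) (revWalk (Lw (tgt e)))
    rw [hrr]
    exact iwf_rev (hLw (tgt e))
  have h0 := closedWalkSum_aux hτ _ _ le_rfl _ hw
  rw [walkSum_append, walkSum_cons, walkSum_rev] at h0
  simp only [if_pos rfl] at h0
  -- h0 : walkSum τ (Lw (src e)) + (τ e + -walkSum τ (Lw (tgt e))) = 0
  have : τ e = walkSum τ (Lw (tgt e)) - walkSum τ (Lw (src e)) := by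
    have h0' := h0
    rw [← sub_eq_zero]
    calc τ e - (walkSum τ (Lw (tgt e)) - walkSum τ (Lw (src e)))
        = walkSum τ (Lw (src e)) + (τ e + -walkSum τ (Lw (tgt e))) := by abel
      _ = 0 := h0'
  exact this

end Dgraph


lemma sum_ite_fiber {α β N : Type} [Fintype α] [Fintype β] [AddCommGroup N] [DecidableEq α]
    (P : α → Prop) [DecidablePred P] (e : β → α) (t : β → N) :
    (∑ a : α, if P a then ∑ i : β, (if e i = a then t i else 0) else 0)
      = ∑ i : β, (if P (e i) then t i else 0) := by
  have step1 : (∑ a : α, if P a then ∑ i : β, (if e i = a then t i else 0) else 0)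
      = ∑ a : α, ∑ i : β, (if e i = a then (if P a then t i else 0) else 0) := by
    refine Finset.sum_congr rfl fun a _ => ?_
    split_ifs with h <;> simp [h]
  rw [step1, Finset.sum_comm]
  refine Finset.sum_congr rfl fun i _ => ?_
  rw [Finset.sum_ite_eq]
  simp

set_option linter.unreachableTactic false in
set_option linter.unusedTactic false in
/-- `f` is `M`-tension-continuous iff the algebraic image of every
`M`-flow on `G` is an `M`-flow on `H`. -/
theorem tensionContinuous_iff_flow_image {M : Type} [AddCommGroup M]
    {V W : Type} [Fintype V] [Fintype W] [DecidableEq V] [DecidableEq W]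
    (G : Dgraph V) (H : Dgraph W) [Fintype G.Edge] [Fintype H.Edge]
    [DecidableEq H.Edge] (f : G.Edge → H.Edge) :
    Dgraph.TensionContinuous M G H f ↔
      ∀ φ : G.Edge → M, Dgraph.IsFlow M G φ →
        Dgraph.IsFlow M H (fun e' => ∑ e : G.Edge, if f e = e' then φ e else 0) := by
  classical
  constructor
  · intro hTT φ hφ w
    rw [sum_ite_fiber (fun e' => Dgraph.tgt e' = w) f φ,
        sum_ite_fiber (fun e' => Dgraph.src e' = w) f φ]
    -- build the (M →+ M)-valued tension on G
    set σhat : G.Edge → (M →+ M) := fun e =>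
      (if Dgraph.tgt (f e) = w then AddMonoidHom.id M else 0)
        - (if Dgraph.src (f e) = w then AddMonoidHom.id M else 0) with hσdef
    have hσapp : ∀ (e : G.Edge) (m : M),
        σhat e m = (if Dgraph.tgt (f e) = w then m else 0)
          - (if Dgraph.src (f e) = w then m else 0) := by
      intro e m
      simp [hσdef, AddMonoidHom.sub_apply, apply_ite (fun (h : M →+ M) => h m)]
    have hτm : ∀ m : M, H.IsTension (fun e' =>
        (if Dgraph.tgt e' = w then m else 0) - (if Dgraph.src e' = w then m else 0)) := by
      intro m
      exact Dgraph.isTension_sub (fun x => if x = w then m else 0)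
    have hσ : G.IsTension σhat := by
      intro n v e dir hc
      ext m
      have h2 := hTT _ (hτm m) n v e dir hc
      simp only [Function.comp] at h2
      rw [AddMonoidHom.finset_sum_apply, AddMonoidHom.zero_apply]
      refine Eq.trans ?_ h2
      refine Finset.sum_congr rfl fun i _ => ?_
      cases hd : dir i <;>
        simp [hd, hσapp, AddMonoidHom.neg_apply, apply_ite (fun (h : M →+ M) => h m)]
    obtain ⟨g, hg⟩ := Dgraph.exists_potential hσ
    have key : ∀ e : G.Edge,
        (if Dgraph.tgt (f e) = w then φ e else 0) - (if Dgraph.src (f e) = w then φ e else 0)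
          = g (Dgraph.tgt e) (φ e) - g (Dgraph.src e) (φ e) := by
      intro e
      have h3 := congrArg (fun (h : M →+ M) => h (φ e)) (hg e)
      simp only [AddMonoidHom.sub_apply] at h3
      rw [hσapp] at h3
      exact h3
    have collect : ∀ (sel : G.Edge → V),
        (∑ e : G.Edge, g (sel e) (φ e))
          = ∑ v : V, g v (∑ e : G.Edge, if sel e = v then φ e else 0) := by
      intro sel
      calc ∑ e : G.Edge, g (sel e) (φ e)
          = ∑ e : G.Edge, ∑ v : V, (if sel e = v then g v (φ e) else 0) := by
            refine Finset.sum_congr rfl fun e _ => ?_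
            rw [Finset.sum_ite_eq]
            simp
        _ = ∑ v : V, ∑ e : G.Edge, (if sel e = v then g v (φ e) else 0) := Finset.sum_comm
        _ = ∑ v : V, g v (∑ e : G.Edge, if sel e = v then φ e else 0) := by
            refine Finset.sum_congr rfl fun v _ => ?_
            rw [map_sum]
            refine Finset.sum_congr rfl fun e _ => ?_
            split_ifs <;> simp
    rw [← sub_eq_zero, ← Finset.sum_sub_distrib,
      Finset.sum_congr rfl fun e _ => key e, Finset.sum_sub_distrib,
      collect Dgraph.tgt, collect Dgraph.src, sub_eq_zero]
    refine Finset.sum_congr rfl fun v _ => ?_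
    rw [hφ v]
  · intro himg τ hτ n v e dir hc
    obtain ⟨g, hg⟩ := Dgraph.exists_potential hτ
    have hflow : ∀ m : M, Dgraph.IsFlow M G
        (fun a => ∑ i : Fin (n + 1), if e i = a then (if dir i then m else -m) else 0) := by
      intro m x
      rw [sum_ite_fiber (fun a => Dgraph.tgt a = x) e (fun i => if dir i then m else -m),
          sum_ite_fiber (fun a => Dgraph.src a = x) e (fun i => if dir i then m else -m)]
      rw [← sub_eq_zero, ← Finset.sum_sub_distrib]
      have hterm : ∀ i : Fin (n + 1),
          (if Dgraph.tgt (e i) = x then (if dir i then m else -m) else 0)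
            - (if Dgraph.src (e i) = x then (if dir i then m else -m) else 0)
          = (if v (i + 1) = x then m else 0) - (if v i = x then m else 0) := by
        intro i
        have hci := hc.1 i
        cases hd : dir i with
        | true =>
          rw [hd] at hci
          simp only [if_true] at hci ⊢
          rw [hci.1, hci.2]
        | false =>
          rw [hd] at hci
          simp only [Bool.false_eq_true, if_false] at hci ⊢
          rw [hci.1, hci.2]
          split_ifs <;> abel
      rw [Finset.sum_congr rfl fun i _ => hterm i, Finset.sum_sub_distrib]
      have hre : (∑ i : Fin (n + 1), if v (i + 1) = x then m else 0)
          = ∑ i : Fin (n + 1), if v i = x then m else 0 :=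
        Fintype.sum_equiv (Equiv.addRight (1 : Fin (n + 1)))
          (fun i => if v (i + 1) = x then m else 0) (fun i => if v i = x then m else 0)
          (fun i => rfl)
      rw [hre, sub_self]
    have hkey : ∀ (x : W) (m : M),
        (∑ i : Fin (n + 1), if Dgraph.tgt (f (e i)) = x then (if dir i then m else -m) else 0)
          = ∑ i : Fin (n + 1), if Dgraph.src (f (e i)) = x then (if dir i then m else -m) else 0 := by
      intro x m
      have h4 := himg _ (hflow m) x
      rw [sum_ite_fiber (fun e' => Dgraph.tgt e' = x) f _,
          sum_ite_fiber (fun e' => Dgraph.src e' = x) f _] at h4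
      rw [sum_ite_fiber (fun a => Dgraph.tgt (f a) = x) e _,
          sum_ite_fiber (fun a => Dgraph.src (f a) = x) e _] at h4
      exact h4
    have hgoal : ∀ i : Fin (n + 1),
        (if dir i then (τ ∘ f) (e i) else -(τ ∘ f) (e i))
          = ∑ x : W, ((if Dgraph.tgt (f (e i)) = x then (if dir i then g x else -g x) else 0)
              - (if Dgraph.src (f (e i)) = x then (if dir i then g x else -g x) else 0)) := by
      intro i
      rw [Finset.sum_sub_distrib]
      have e1 : (∑ x : W, if Dgraph.tgt (f (e i)) = x then (if dir i then g x else -g x) else 0)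
          = if dir i then g (Dgraph.tgt (f (e i))) else -g (Dgraph.tgt (f (e i))) := by
        rw [Finset.sum_ite_eq]
        simp
      have e2 : (∑ x : W, if Dgraph.src (f (e i)) = x then (if dir i then g x else -g x) else 0)
          = if dir i then g (Dgraph.src (f (e i))) else -g (Dgraph.src (f (e i))) := by
        rw [Finset.sum_ite_eq]
        simp
      rw [e1, e2]
      cases hd : dir i <;> simp [Function.comp, hg (f (e i)), hd] <;> abel
    rw [Finset.sum_congr rfl fun i _ => hgoal i, Finset.sum_comm]
    refine Finset.sum_eq_zero fun x _ => ?_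
    rw [Finset.sum_sub_distrib, sub_eq_zero]
    exact hkey x (g x)
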